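/- Suppose p ≥ 1 and p·S₀^{1−q}·(μ − β·S₀^q·I₀^{p−1}) > (1−q)·β·I₀^p. Then I(t) → 0 as t → ∞ and there exists a constant S* > 0 such that S(t) → S* as t → ∞. -/

import Mathlib

open Filter Topology

set_option maxHeartbeats 1000000

/-- Proposition 8.1(ii) of the paper: for the SI ODE system
`S' = −β S^q I^p`, `I' = β S^q I^p − μ I` with `β, μ > 0`, `p ≥ 1`, `q ∈ (0,1)`,
`S(0) = S₀ > 0`, `I(0) = I₀ > 0`, if `p·S₀^{1−q}·(μ − β·S₀^q·I₀^{p−1}) > (1−q)·β·I₀^p`,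
then `I(t) → 0` and `S(t) → S*` as `t → ∞` for some constant `S* > 0`. -/
theorem stmt7 (β μ p q S₀ I₀ : ℝ) (S I : ℝ → ℝ)
    (hβ : 0 < β) (hμ : 0 < μ) (hp : 1 ≤ p) (hq0 : 0 < q) (hq1 : q < 1)
    (hS₀ : 0 < S₀) (hI₀ : 0 < I₀) (hS0 : S 0 = S₀) (hI0 : I 0 = I₀)
    (hScont : ContinuousOn S (Set.Ici 0)) (hIcont : ContinuousOn I (Set.Ici 0))
    (hSnonneg : ∀ t : ℝ, 0 ≤ t → 0 ≤ S t) (hIpos : ∀ t : ℝ, 0 ≤ t → 0 < I t)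
    (hSode : ∀ t : ℝ, 0 < t → HasDerivAt S (-(β * S t ^ q * I t ^ p)) t)
    (hIode : ∀ t : ℝ, 0 < t → HasDerivAt I (β * S t ^ q * I t ^ p - μ * I t) t)
    (hgt : (1 - q) * β * I₀ ^ p < p * S₀ ^ (1 - q) * (μ - β * S₀ ^ q * I₀ ^ (p - 1))) :
    Tendsto I atTop (𝓝 0) ∧ ∃ Sstar : ℝ, 0 < Sstar ∧ Tendsto S atTop (𝓝 Sstar) := by
  have hq1' : (0:ℝ) < 1 - q := by linarith
  have hppos : (0:ℝ) < p := lt_of_lt_of_le one_pos hp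
  have hp1 : (0:ℝ) ≤ p - 1 := by linarith
  have hS0q : 0 < S₀ ^ q := Real.rpow_pos_of_pos hS₀ q
  have hS0q' : 0 < S₀ ^ (1 - q) := Real.rpow_pos_of_pos hS₀ (1 - q)
  have hI0p : 0 < I₀ ^ p := Real.rpow_pos_of_pos hI₀ p
  have hI0p1 : 0 < I₀ ^ (p - 1) := Real.rpow_pos_of_pos hI₀ (p - 1)
  set c : ℝ := β * S₀ ^ q * I₀ ^ (p - 1) with hc
  have hcpos : 0 < c := by positivity
  have hcμ : c < μ := by
    have h1 : 0 < (1 - q) * β * I₀ ^ p := by positivity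
    have h2 : 0 < p * S₀ ^ (1 - q) := by positivity
    nlinarith
  set δ : ℝ := μ - c with hδdef
  have hδ : 0 < δ := by simp only [hδdef]; linarith
  -- Step 1: S is antitone on [0, ∞)
  have hSanti : AntitoneOn S (Set.Ici 0) := by
    apply antitoneOn_of_deriv_nonpos (convex_Ici 0) hScont
    · intro t ht
      rw [interior_Ici] at ht
      exact (hSode t ht).differentiableAt.differentiableWithinAt
    · intro t ht
      rw [interior_Ici] at ht
      rw [(hSode t ht).deriv]
      have h1 : 0 ≤ S t ^ q := Real.rpow_nonneg (hSnonneg t ht.le) q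
      have h2 : 0 ≤ I t ^ p := Real.rpow_nonneg (hIpos t ht.le).le p
      have : 0 ≤ β * S t ^ q * I t ^ p := by positivity
      linarith
  have hSle : ∀ t : ℝ, 0 ≤ t → S t ≤ S₀ := by
    intro t ht
    have := hSanti (Set.self_mem_Ici) ht ht
    rwa [hS0] at this
  -- Step 2: I t ≤ I₀ for all t ≥ 0
  -- auxiliary: a barrier lemma
  have key : ∀ ε : ℝ, 0 < ε → β * S₀ ^ q * (I₀ + ε) ^ (p - 1) < μ →
      ∀ t : ℝ, 0 ≤ t → I t < I₀ + ε := by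
    intro ε hε hεμ t₃ ht₃
    by_contra hcon
    push_neg at hcon
    set A : Set ℝ := Set.Icc 0 t₃ ∩ I ⁻¹' (Set.Ici (I₀ + ε)) with hA
    have hAclosed : IsClosed A :=
      ContinuousOn.preimage_isClosed_of_isClosed
        (hIcont.mono (Set.Icc_subset_Ici_self)) isClosed_Icc isClosed_Ici
    have hAne : A.Nonempty := ⟨t₃, ⟨ht₃, le_refl _⟩, hcon⟩
    have hAbdd : BddBelow A := ⟨0, fun x hx => hx.1.1⟩
    set t₁ : ℝ := sInf A with ht₁def
    have ht₁A : t₁ ∈ A := hAclosed.csInf_mem hAne hAbdd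
    have ht₁0 : 0 ≤ t₁ := ht₁A.1.1
    have ht₁pos : 0 < t₁ := by
      rcases eq_or_lt_of_le ht₁0 with h | h
      · exfalso
        have := ht₁A.2
        rw [← h, Set.mem_preimage, hI0] at this
        simp at this
        linarith
      · exact h
    have hlt : ∀ s : ℝ, 0 ≤ s → s < t₁ → I s < I₀ + ε := by
      intro s hs hst
      by_contra hcc
      push_neg at hcc
      have : s ∈ A := ⟨⟨hs, hst.le.trans ht₁A.1.2⟩, hcc⟩
      exact absurd (csInf_le hAbdd this) (not_le.mpr hst)
    have hanti : StrictAntiOn I (Set.Icc 0 t₁) := by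
      apply strictAntiOn_of_deriv_neg (convex_Icc 0 t₁)
        (hIcont.mono (Set.Icc_subset_Ici_self))
      intro s hs
      rw [interior_Icc] at hs
      rw [(hIode s hs.1).deriv]
      have hIs : 0 < I s := hIpos s hs.1.le
      have hIsε : I s < I₀ + ε := hlt s hs.1.le hs.2
      have hb1 : S s ^ q ≤ S₀ ^ q :=
        Real.rpow_le_rpow (hSnonneg s hs.1.le) (hSle s hs.1.le) hq0.le
      have hb2 : I s ^ (p - 1) ≤ (I₀ + ε) ^ (p - 1) :=
        Real.rpow_le_rpow hIs.le hIsε.le hp1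
      have hsplit : I s ^ p = I s ^ (p - 1) * I s := by
        rw [← Real.rpow_add_one hIs.ne' (p - 1)]
        norm_num
      have hfac : β * S s ^ q * I s ^ (p - 1) < μ := by
        calc β * S s ^ q * I s ^ (p - 1)
            ≤ β * S₀ ^ q * (I₀ + ε) ^ (p - 1) := by
              apply mul_le_mul
              · exact mul_le_mul le_rfl hb1 (Real.rpow_nonneg (hSnonneg s hs.1.le) q) hβ.le
              · exact hb2
              · exact Real.rpow_nonneg hIs.le _
              · positivity
          _ < μ := hεμ
      have heq : β * S s ^ q * I s ^ p = (β * S s ^ q * I s ^ (p - 1)) * I s := by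
        rw [hsplit]; ring
      have hmul := mul_lt_mul_of_pos_right hfac hIs
      rw [heq]; linarith
    have h1 : I t₁ < I 0 := hanti (Set.left_mem_Icc.mpr ht₁pos.le)
      (Set.right_mem_Icc.mpr ht₁pos.le) ht₁pos
    have h2 : I₀ + ε ≤ I t₁ := ht₁A.2
    rw [hI0] at h1
    linarith
  -- existence of a suitable small ε
  have hIle : ∀ t : ℝ, 0 ≤ t → I t ≤ I₀ := by
    have hcont : ContinuousAt (fun ε : ℝ => β * S₀ ^ q * (I₀ + ε) ^ (p - 1)) 0 := by
      apply ContinuousAt.mul continuousAt_const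
      have h1 : ContinuousAt (fun ε : ℝ => I₀ + ε) 0 := by fun_prop
      have h2 : ContinuousAt (fun x : ℝ => x ^ (p - 1)) (I₀ + 0) :=
        Real.continuousAt_rpow_const _ _ (Or.inl (by positivity))
      exact h2.comp h1
    have hval : (fun ε : ℝ => β * S₀ ^ q * (I₀ + ε) ^ (p - 1)) 0 < μ := by
      simpa using hcμ
    have hev : ∀ᶠ ε in 𝓝 (0:ℝ), β * S₀ ^ q * (I₀ + ε) ^ (p - 1) < μ :=
      hcont.eventually_lt continuousAt_const hval
    rw [Metric.eventually_nhds_iff] at hev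
    obtain ⟨r, hr, hrp⟩ := hev
    intro t ht
    by_contra hcon
    push_neg at hcon
    set ε : ℝ := min (r / 2) ((I t - I₀) / 2) with hεdef
    have hεpos : 0 < ε := lt_min (by linarith) (by linarith)
    have hεr : ε < r := lt_of_le_of_lt (min_le_left _ _) (by linarith)
    have hcond : β * S₀ ^ q * (I₀ + ε) ^ (p - 1) < μ := by
      apply hrp
      rw [Real.dist_eq, sub_zero, abs_of_pos hεpos]
      exact hεr
    have := key ε hεpos hcond t ht
    have hεle : ε ≤ (I t - I₀) / 2 := min_le_right _ _
    linarith
  -- Step 3: the derivative inequality I' ≤ -δ I for t > 0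
  have hderI : ∀ s : ℝ, 0 < s → β * S s ^ q * I s ^ p - μ * I s ≤ -δ * I s := by
    intro s hs
    have hIs : 0 < I s := hIpos s hs.le
    have hb1 : S s ^ q ≤ S₀ ^ q :=
      Real.rpow_le_rpow (hSnonneg s hs.le) (hSle s hs.le) hq0.le
    have hb2 : I s ^ (p - 1) ≤ I₀ ^ (p - 1) :=
      Real.rpow_le_rpow hIs.le (hIle s hs.le) hp1
    have hsplit : I s ^ p = I s ^ (p - 1) * I s := by
      rw [← Real.rpow_add_one hIs.ne' (p - 1)]
      norm_num
    have hSq : 0 ≤ S s ^ q := Real.rpow_nonneg (hSnonneg s hs.le) q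
    have hfac : β * S s ^ q * I s ^ (p - 1) ≤ c := by
      calc β * S s ^ q * I s ^ (p - 1)
          ≤ β * S₀ ^ q * I₀ ^ (p - 1) := by
            apply mul_le_mul
            · exact mul_le_mul le_rfl hb1 hSq hβ.le
            · exact hb2
            · exact Real.rpow_nonneg hIs.le _
            · positivity
        _ = c := rfl
    have : β * S s ^ q * I s ^ p = (β * S s ^ q * I s ^ (p - 1)) * I s := by
      rw [hsplit]; ring
    rw [this]
    simp only [hδdef]
    nlinarith
  -- Step 4: exponential decay of I
  have hdecay : ∀ t : ℝ, 0 ≤ t → I t ≤ I₀ * Real.exp (-(δ * t)) := by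
    have hganti : AntitoneOn (fun t => I t * Real.exp (δ * t)) (Set.Ici 0) := by
      have hexp : ∀ t : ℝ, HasDerivAt (fun t => Real.exp (δ * t)) (Real.exp (δ * t) * δ) t := by
        intro t
        have h1 : HasDerivAt (fun x : ℝ => δ * x) δ t := by
          simpa using (hasDerivAt_id t).const_mul δ
        have h2 := (Real.hasDerivAt_exp (δ * t)).comp t h1
        exact h2
      have hgcont : ContinuousOn (fun t => I t * Real.exp (δ * t)) (Set.Ici 0) := by
        apply hIcont.mul
        exact (Real.continuous_exp.comp (continuous_const.mul continuous_id)).continuousOn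
      refine antitoneOn_of_deriv_nonpos (convex_Ici 0) hgcont ?_ ?_
      · intro t ht
        rw [interior_Ici] at ht
        exact ((hIode t ht).mul (hexp t)).differentiableAt.differentiableWithinAt
      · intro t ht
        rw [interior_Ici] at ht
        rw [HasDerivAt.deriv (f := fun t => I t * Real.exp (δ * t)) ((hIode t ht).mul (hexp t))]
        have h1 := hderI t ht
        have h2 : 0 < Real.exp (δ * t) := Real.exp_pos _
        have h3 : 0 < I t := hIpos t ht.le
        nlinarith
    intro t ht
    have := hganti Set.self_mem_Ici ht ht
    simp only [hI0, mul_zero, Real.exp_zero, mul_one] at this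
    rw [Real.exp_neg, ← div_eq_mul_inv, le_div_iff₀ (Real.exp_pos _)]
    exact this
  -- Step 5: I → 0
  have hItendsto : Tendsto I atTop (𝓝 0) := by
    have hub : Tendsto (fun t : ℝ => I₀ * Real.exp (-(δ * t))) atTop (𝓝 0) := by
      have h1 : Tendsto (fun t : ℝ => δ * t) atTop atTop :=
        Tendsto.const_mul_atTop hδ tendsto_id
      have h2 : Tendsto (fun t : ℝ => Real.exp (-(δ * t))) atTop (𝓝 0) :=
        Real.tendsto_exp_neg_atTop_nhds_zero.comp h1
      simpa using h2.const_mul I₀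
    apply tendsto_of_tendsto_of_tendsto_of_le_of_le' tendsto_const_nhds hub
    · filter_upwards [eventually_ge_atTop (0:ℝ)] with t ht
      exact (hIpos t ht).le
    · filter_upwards [eventually_ge_atTop (0:ℝ)] with t ht
      exact hdecay t ht
  -- Step 6: lower bound for S
  set K : ℝ := (1 - q) * β / (p * δ) with hK
  have hKpos : 0 < K := by positivity
  set ε₀ : ℝ := S₀ ^ (1 - q) - K * I₀ ^ p with hε₀def
  have hε₀ : 0 < ε₀ := by
    have hKI : K * I₀ ^ p < S₀ ^ (1 - q) := by
      rw [hK, div_mul_eq_mul_div, div_lt_iff₀ (by positivity)]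
      nlinarith [hgt]
    simp only [hε₀def]; linarith
  set E : ℝ := ε₀ ^ (1 / (1 - q)) with hEdef
  have hEpos : 0 < E := Real.rpow_pos_of_pos hε₀ _
  have hEpow : E ^ (1 - q) = ε₀ := by
    rw [hEdef, ← Real.rpow_mul hε₀.le]
    rw [one_div_mul_cancel hq1'.ne', Real.rpow_one]
  have hS₀E : E < S₀ := by
    by_contra hcc
    push_neg at hcc
    have : S₀ ^ (1 - q) ≤ E ^ (1 - q) := Real.rpow_le_rpow hS₀.le hcc hq1'.le
    rw [hEpow] at this
    have : 0 < K * I₀ ^ p := by positivity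
    simp only [hε₀def] at hε₀
    linarith
  set ψ : ℝ → ℝ := fun t => S t ^ (1 - q) - K * I t ^ p with hψ
  have hSE : ∀ t : ℝ, 0 ≤ t → E ≤ S t := by
    intro t₃ ht₃
    by_contra hcon
    push_neg at hcon
    set m : ℝ := (S t₃ + E) / 2 with hm
    have hm0 : 0 < m := by
      have := hSnonneg t₃ ht₃
      simp only [hm]; linarith
    have hmE : m < E := by simp only [hm]; linarith
    have hSt₃m : S t₃ ≤ m := by simp only [hm]; linarith
    set B : Set ℝ := Set.Icc 0 t₃ ∩ S ⁻¹' (Set.Iic m) with hB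
    have hBclosed : IsClosed B :=
      ContinuousOn.preimage_isClosed_of_isClosed
        (hScont.mono Set.Icc_subset_Ici_self) isClosed_Icc isClosed_Iic
    have hBne : B.Nonempty := ⟨t₃, ⟨ht₃, le_refl _⟩, hSt₃m⟩
    have hBbdd : BddBelow B := ⟨0, fun x hx => hx.1.1⟩
    set t₂ : ℝ := sInf B with ht₂def
    have ht₂B : t₂ ∈ B := hBclosed.csInf_mem hBne hBbdd
    have ht₂0 : 0 ≤ t₂ := ht₂B.1.1
    have ht₂pos : 0 < t₂ := by
      rcases eq_or_lt_of_le ht₂0 with h | h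
      · exfalso
        have h2 := ht₂B.2
        rw [← h, Set.mem_preimage, hS0] at h2
        simp at h2
        linarith
      · exact h
    have hmlt : ∀ s : ℝ, 0 ≤ s → s < t₂ → m < S s := by
      intro s hs hst
      by_contra hcc
      push_neg at hcc
      have : s ∈ B := ⟨⟨hs, hst.le.trans ht₂B.1.2⟩, hcc⟩
      exact absurd (csInf_le hBbdd this) (not_le.mpr hst)
    have hψmono : MonotoneOn ψ (Set.Icc 0 t₂) := by
      have hψderiv : ∀ s ∈ Set.Ioo (0:ℝ) t₂,
          HasDerivAt ψ ((-(β * S s ^ q * I s ^ p)) * (1 - q) * S s ^ (1 - q - 1)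
            - K * ((β * S s ^ q * I s ^ p - μ * I s) * p * I s ^ (p - 1))) s := by
        intro s hs
        have hSs : 0 < S s := lt_trans hm0 (hmlt s hs.1.le hs.2)
        have hd1 : HasDerivAt (fun t => S t ^ (1 - q))
            ((-(β * S s ^ q * I s ^ p)) * (1 - q) * S s ^ (1 - q - 1)) s :=
          (hSode s hs.1).rpow_const (Or.inl hSs.ne')
        have hd2 : HasDerivAt (fun t => I t ^ p)
            ((β * S s ^ q * I s ^ p - μ * I s) * p * I s ^ (p - 1)) s :=
          (hIode s hs.1).rpow_const (Or.inl (hIpos s hs.1.le).ne')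
        exact hd1.sub (hd2.const_mul K)
      have hψcont : ContinuousOn ψ (Set.Icc 0 t₂) := by
        apply ContinuousOn.sub
        · exact (hScont.mono Set.Icc_subset_Ici_self).rpow_const
            (fun x hx => Or.inr hq1'.le)
        · exact continuousOn_const.mul ((hIcont.mono Set.Icc_subset_Ici_self).rpow_const
            (fun x hx => Or.inr hppos.le))
      refine monotoneOn_of_deriv_nonneg (convex_Icc 0 t₂) hψcont ?_ ?_
      · intro s hs
        rw [interior_Icc] at hs
        exact (hψderiv s hs).differentiableAt.differentiableWithinAt
      · intro s hs
        rw [interior_Icc] at hs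
        rw [(hψderiv s hs).deriv]
        have hSs : 0 < S s := lt_trans hm0 (hmlt s hs.1.le hs.2)
        have hIs : 0 < I s := hIpos s hs.1.le
        have hcancel : S s ^ q * S s ^ (1 - q - 1) = 1 := by
          rw [← Real.rpow_add hSs]
          norm_num
        have hsplit : I s ^ (p - 1) * I s = I s ^ p := by
          rw [← Real.rpow_add_one hIs.ne' (p - 1)]
          norm_num
        have hder := hderI s hs.1
        have hIp1 : 0 ≤ I s ^ (p - 1) := Real.rpow_nonneg hIs.le _
        have hIp : 0 < I s ^ p := Real.rpow_pos_of_pos hIs p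
        -- term1 = -(1-q) β I^p ; term2 ≥ K p δ I^p = (1-q) β I^p
        have ht1 : (-(β * S s ^ q * I s ^ p)) * (1 - q) * S s ^ (1 - q - 1)
            = -((1 - q) * β * I s ^ p) := by
          have : (-(β * S s ^ q * I s ^ p)) * (1 - q) * S s ^ (1 - q - 1)
              = -((1 - q) * β * I s ^ p) * (S s ^ q * S s ^ (1 - q - 1)) := by ring
          rw [this, hcancel, mul_one]
        have ht2 : K * ((β * S s ^ q * I s ^ p - μ * I s) * p * I s ^ (p - 1))
            ≤ -((1 - q) * β * I s ^ p) := by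
          have h1 : (β * S s ^ q * I s ^ p - μ * I s) * p * I s ^ (p - 1)
              ≤ (-δ * I s) * p * I s ^ (p - 1) := by
            apply mul_le_mul_of_nonneg_right _ hIp1
            exact mul_le_mul_of_nonneg_right hder hppos.le
          have h2 : (-δ * I s) * p * I s ^ (p - 1) = -(δ * p * I s ^ p) := by
            rw [← hsplit]; ring
          have h3 : K * ((β * S s ^ q * I s ^ p - μ * I s) * p * I s ^ (p - 1))
              ≤ K * (-(δ * p * I s ^ p)) := by
            rw [← h2]
            exact mul_le_mul_of_nonneg_left h1 hKpos.le
          have h4 : K * (-(δ * p * I s ^ p)) = -((1 - q) * β * I s ^ p) := by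
            have hpδ : p * δ ≠ 0 := by positivity
            rw [hK]
            field_simp
          linarith [h3, le_of_eq h4]
        rw [ht1]
        linarith
    have hψ0 : ψ 0 = ε₀ := by
      show S 0 ^ (1 - q) - K * I 0 ^ p = ε₀
      rw [hS0, hI0]
    have hle := hψmono (Set.left_mem_Icc.mpr ht₂pos.le) (Set.right_mem_Icc.mpr ht₂pos.le) ht₂pos.le
    rw [hψ0] at hle
    have hSt₂ : S t₂ ^ (1 - q) ≥ ε₀ := by
      have hKI : 0 ≤ K * I t₂ ^ p :=
        mul_nonneg hKpos.le (Real.rpow_nonneg (hIpos t₂ ht₂0).le p)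
      simp only [hψ] at hle
      linarith
    have hSt₂m : S t₂ ≤ m := ht₂B.2
    have : S t₂ ^ (1 - q) < E ^ (1 - q) :=
      Real.rpow_lt_rpow (hSnonneg t₂ ht₂0) (lt_of_le_of_lt hSt₂m hmE) hq1'
    rw [hEpow] at this
    linarith
  -- Step 7: S converges
  set L : ℝ := sInf (S '' Set.Ici 0) with hL
  have hbdd : BddBelow (S '' Set.Ici 0) := by
    refine ⟨E, ?_⟩
    rintro y ⟨t, ht, rfl⟩
    exact hSE t ht
  have hne : (S '' Set.Ici 0).Nonempty := ⟨S 0, 0, Set.self_mem_Ici, rfl⟩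
  have hEL : E ≤ L := le_csInf hne (by rintro y ⟨t, ht, rfl⟩; exact hSE t ht)
  have hStendsto : Tendsto S atTop (𝓝 L) := by
    rw [Metric.tendsto_atTop]
    intro ε hε
    obtain ⟨y, hy, hylt⟩ : ∃ y ∈ S '' Set.Ici 0, y < L + ε :=
      exists_lt_of_csInf_lt hne (by rw [← hL]; linarith)
    obtain ⟨t₀, ht₀, rfl⟩ := hy
    refine ⟨t₀, fun t ht => ?_⟩
    have ht0 : (0:ℝ) ≤ t := le_trans ht₀ ht
    have h1 : L ≤ S t := csInf_le hbdd ⟨t, ht0, rfl⟩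
    have h2 : S t ≤ S t₀ := hSanti ht₀ ht0 ht
    rw [Real.dist_eq, abs_lt]
    constructor <;> linarith
  exact ⟨hItendsto, L, lt_of_lt_of_le hEpos hEL, hStendsto⟩
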